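/- Let b ∈ (0,1). The curves c = c_*(τ) (defined for τ > 0) and c = c_#(τ) (defined for τ > τ(b)) intersect at exactly one point: there exists a unique τ₀ > τ(b) such that c_*(τ₀) = c_#(τ₀). -/

import Mathlib

open Filter Set

set_option maxHeartbeats 1000000

/-- Characteristic function χ₀(z) = z² − c·z + 1/(1 − b·e^{−z·c·τ}). -/
noncomputable def chi0 (b c τ z : ℝ) : ℝ :=
  z ^ 2 - c * z + 1 / (1 - b * Real.exp (-(z * c * τ)))

/-- Characteristic function χ₁(z) = z² − c·z − e^{−z·c·τ}/(1 − b·e^{−z·c·τ}). -/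
noncomputable def chi1 (b c τ z : ℝ) : ℝ :=
  z ^ 2 - c * z - Real.exp (-(z * c * τ)) / (1 - b * Real.exp (-(z * c * τ)))

private lemma den0_pos {b x : ℝ} (hb0 : 0 < b) (hb1 : b < 1) (hx : 0 ≤ x) :
    0 < 1 - b * Real.exp (-x) := by
  have h1 : Real.exp (-x) ≤ 1 := Real.exp_le_one_iff.mpr (by linarith)
  nlinarith [Real.exp_pos (-x)]

private lemma chi0_contAt {b c τ z : ℝ} (hb0 : 0 < b) (hb1 : b < 1) (hx : 0 ≤ z * c * τ) :
    ContinuousAt (chi0 b c τ) z := by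
  have hden : 1 - b * Real.exp (-(z * c * τ)) ≠ 0 := ne_of_gt (den0_pos hb0 hb1 hx)
  unfold chi0
  exact ContinuousAt.add (by fun_prop)
    (ContinuousAt.div continuousAt_const (by fun_prop) hden)

private lemma chi1_contAt {b c τ z : ℝ} (h : b * Real.exp (-(z * c * τ)) ≠ 1) :
    ContinuousAt (chi1 b c τ) z := by
  have hden : 1 - b * Real.exp (-(z * c * τ)) ≠ 0 := sub_ne_zero.mpr (Ne.symm h)
  unfold chi1
  exact ContinuousAt.sub (by fun_prop)
    (ContinuousAt.div (by fun_prop) (by fun_prop) hden)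

private lemma chi0_exists_zero {b c τ z₁ : ℝ} (hb0 : 0 < b) (hb1 : b < 1)
    (hc : 0 < c) (hτ : 0 < τ) (hz₁ : 0 < z₁) (h : chi0 b c τ z₁ ≤ 0) :
    ∃ z > (0 : ℝ), chi0 b c τ z = 0 := by
  have hZpos : (0:ℝ) < z₁ + c := by linarith
  have hZ : 0 < chi0 b c τ (z₁ + c) := by
    have hx : 0 ≤ (z₁ + c) * c * τ := by positivity
    have hden := den0_pos hb0 hb1 hx
    have hinv : 0 < 1 / (1 - b * Real.exp (-((z₁ + c) * c * τ))) := by positivity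
    unfold chi0
    nlinarith [sq_nonneg z₁, mul_pos hz₁ hc]
  have hcont : ContinuousOn (chi0 b c τ) (Icc z₁ (z₁ + c)) := by
    intro z hz
    have hzpos : 0 < z := lt_of_lt_of_le hz₁ hz.1
    exact (chi0_contAt hb0 hb1 (by positivity)).continuousWithinAt
  have hmem : (0:ℝ) ∈ Icc (chi0 b c τ z₁) (chi0 b c τ (z₁ + c)) := ⟨h, hZ.le⟩
  obtain ⟨z, hzmem, hz0⟩ := intermediate_value_Icc (by linarith) hcont hmem
  exact ⟨z, lt_of_lt_of_le hz₁ hzmem.1, hz0⟩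

private lemma chi1_exists_zero {b c τ z₁ : ℝ} (hb0 : 0 < b) (hb1 : b < 1)
    (hc : 0 < c) (hτ : 0 < τ) (hz₁ : z₁ < 0)
    (hden : b * Real.exp (-(z₁ * c * τ)) < 1) (h : 0 ≤ chi1 b c τ z₁) :
    ∃ z < (0 : ℝ), chi1 b c τ z = 0 := by
  have h1b : 0 < 1 - b := by linarith
  have hval : chi1 b c τ 0 = -(1 / (1 - b)) := by simp [chi1]
  have hneg : chi1 b c τ 0 < 0 := by
    rw [hval]
    have : 0 < 1 / (1 - b) := by positivity
    linarith
  have hcont : ContinuousOn (chi1 b c τ) (Icc z₁ 0) := by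
    intro z hz
    refine (chi1_contAt ?_).continuousWithinAt
    have hmono : Real.exp (-(z * c * τ)) ≤ Real.exp (-(z₁ * c * τ)) := by
      apply Real.exp_le_exp.mpr
      have : z₁ * c * τ ≤ z * c * τ := by
        have := hz.1
        nlinarith [mul_pos hc hτ]
      linarith
    have : b * Real.exp (-(z * c * τ)) ≤ b * Real.exp (-(z₁ * c * τ)) :=
      mul_le_mul_of_nonneg_left hmono hb0.le
    exact ne_of_lt (lt_of_le_of_lt this hden)
  have hmem : (0:ℝ) ∈ Icc (chi1 b c τ 0) (chi1 b c τ z₁) := ⟨hneg.le, h⟩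
  obtain ⟨z, hzmem, hz0⟩ := intermediate_value_Icc' hz₁.le hcont hmem
  refine ⟨z, ?_, hz0⟩
  rcases lt_or_eq_of_le hzmem.2 with h' | h'
  · exact h'
  · exfalso; rw [h'] at hz0; rw [hz0] at hneg; exact lt_irrefl 0 hneg

private lemma chi1_zero_data {b c τ z : ℝ} (hb0 : 0 < b) (hc : 0 < c) (hz : z < 0)
    (h : chi1 b c τ z = 0) :
    b * Real.exp (-(z * c * τ)) < 1 ∧
      Real.exp (-(z * c * τ)) / (1 - b * Real.exp (-(z * c * τ))) = z ^ 2 - c * z := by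
  have hE : 0 < Real.exp (-(z * c * τ)) := Real.exp_pos _
  have hq : 0 < z ^ 2 - c * z := by nlinarith
  unfold chi1 at h
  have heq : Real.exp (-(z * c * τ)) / (1 - b * Real.exp (-(z * c * τ))) = z ^ 2 - c * z := by
    linarith
  refine ⟨?_, heq⟩
  rcases lt_trichotomy (1 - b * Real.exp (-(z * c * τ))) 0 with h1 | h1 | h1
  · exfalso
    have : Real.exp (-(z * c * τ)) / (1 - b * Real.exp (-(z * c * τ))) < 0 :=
      div_neg_of_pos_of_neg hE h1
    linarith
  · exfalso; rw [h1, div_zero] at heq; linarith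
  · linarith



private lemma cross_ineq₁ {s τ₁ τ₂ A B : ℝ} (hs0 : 0 < s) (hδ : 1/τ₂ < 1/τ₁)
    (hA2 : s ^ 2 / B - s / τ₂ ≤ s ^ 2 / A - s / τ₁) : 1/B < 1/A := by
  by_contra hy
  push_neg at hy
  have p1 : 0 < s * (1/τ₁) - s * (1/τ₂) := by
    have := mul_pos hs0 (sub_pos.mpr hδ); linarith [mul_sub s (1/τ₁) (1/τ₂)]
  have p2 : 0 ≤ s^2 * (1/B) - s^2 * (1/A) := by
    have := mul_nonneg (sq_nonneg s) (sub_nonneg.mpr hy); linarith [mul_sub (s^2) (1/B) (1/A)]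
  have e1 : s * (1/τ₁) = s / τ₁ := by ring
  have e2 : s * (1/τ₂) = s / τ₂ := by ring
  have e3 : s^2 * (1/B) = s^2 / B := by ring
  have e4 : s^2 * (1/A) = s^2 / A := by ring
  rw [e1, e2] at p1
  rw [e3, e4] at p2
  linarith

private lemma cross_ineq₂ {s τ₁ τ₂ A B : ℝ} (hs0 : 0 < s) (hδ : 1/τ₂ < 1/τ₁)
    (hB2 : s ^ 2 / A + s / τ₁ ≤ s ^ 2 / B + s / τ₂) : 1/A < 1/B := by
  by_contra hy
  push_neg at hy
  have p1 : 0 < s * (1/τ₁) - s * (1/τ₂) := by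
    have := mul_pos hs0 (sub_pos.mpr hδ); linarith [mul_sub s (1/τ₁) (1/τ₂)]
  have p2 : 0 ≤ s^2 * (1/A) - s^2 * (1/B) := by
    have := mul_nonneg (sq_nonneg s) (sub_nonneg.mpr hy); linarith [mul_sub (s^2) (1/A) (1/B)]
  have e1 : s * (1/τ₁) = s / τ₁ := by ring
  have e2 : s * (1/τ₂) = s / τ₂ := by ring
  have e3 : s^2 * (1/B) = s^2 / B := by ring
  have e4 : s^2 * (1/A) = s^2 / A := by ring
  rw [e1, e2] at p1
  rw [e3, e4] at p2
  linarith

-- the uniqueness key, as a standalone lemma with the needed hypotheses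
private theorem key_lemma (b : ℝ) (hb0 : 0 < b) (hb1 : b < 1)
    (τb : ℝ) (hτb : 0 < τb) (cstar csharp : ℝ → ℝ)
    (hcs_anti : StrictAntiOn cstar (Set.Ioi 0))
    (hcs_gt2 : ∀ τ > (0 : ℝ), 2 < cstar τ)
    (hcs_char : ∀ τ > (0 : ℝ), ∀ c > (0 : ℝ),
      ((∃ z > (0 : ℝ), chi0 b c τ z = 0) ↔ cstar τ ≤ c))
    (hsh_char : ∀ τ > τb, ∀ c > (0 : ℝ),
      ((∃ z < (0 : ℝ), chi1 b c τ z = 0) ↔ c ≤ csharp τ))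
    (τ₁ τ₂ : ℝ) (hτ₁b : τb < τ₁) (h12 : τ₁ < τ₂)
    (h₁ : cstar τ₁ = csharp τ₁) (h₂ : cstar τ₂ = csharp τ₂) : False := by
  have hτ₁0 : 0 < τ₁ := lt_trans hτb hτ₁b
  have hτ₂0 : 0 < τ₂ := lt_trans hτ₁0 h12
  have hτ₂b : τb < τ₂ := lt_trans hτ₁b h12
  set c₁ := cstar τ₁ with hc₁def
  set c₂ := cstar τ₂ with hc₂def
  have hc₁0 : 0 < c₁ := by have := hcs_gt2 τ₁ hτ₁0; linarith
  have hc₂0 : 0 < c₂ := by have := hcs_gt2 τ₂ hτ₂0; linarith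
  have hτ₁ne : τ₁ ≠ 0 := ne_of_gt hτ₁0
  have hτ₂ne : τ₂ ≠ 0 := ne_of_gt hτ₂0
  have hc₁ne : c₁ ≠ 0 := ne_of_gt hc₁0
  have hc₂ne : c₂ ≠ 0 := ne_of_gt hc₂0
  -- claim2 : along τ₁, at the critical speed, chi0 in t-form is nonnegative
  have claim2 : ∀ t > (0:ℝ),
      0 ≤ t ^ 2 / (c₁ * τ₁) ^ 2 - t / τ₁ + 1 / (1 - b * Real.exp (-t)) := by
    intro t ht
    by_contra hlt
    push_neg at hlt
    set F : ℝ → ℝ := fun c => t ^ 2 / (c * τ₁) ^ 2 - t / τ₁ + 1 / (1 - b * Real.exp (-t))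
      with hFdef
    have hFc₁ : F c₁ < 0 := hlt
    have hFcont : ContinuousAt F c₁ := by
      have h1 : ((c₁ * τ₁) ^ 2 : ℝ) ≠ 0 := by positivity
      exact ContinuousAt.add
        (ContinuousAt.sub (ContinuousAt.div continuousAt_const (by fun_prop) h1)
          continuousAt_const) continuousAt_const
    have e1 : ∀ᶠ c in nhds c₁, F c < 0 := hFcont.eventually (eventually_lt_nhds hFc₁)
    have e2 : ∀ᶠ c in nhds c₁, 0 < c := eventually_gt_nhds hc₁0
    have e3 : ∀ᶠ c in nhdsWithin c₁ (Iio c₁), F c < 0 ∧ 0 < c :=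
      (e1.and e2).filter_mono nhdsWithin_le_nhds
    have e4 : ∀ᶠ c in nhdsWithin c₁ (Iio c₁), c ∈ Iio c₁ := eventually_mem_nhdsWithin
    obtain ⟨c, ⟨hFc, hc0⟩, hcc₁⟩ := (e3.and e4).exists
    have hcne : c ≠ 0 := ne_of_gt hc0
    have hchi : chi0 b c τ₁ (t / (c * τ₁)) = F c := by
      unfold chi0
      rw [show t / (c * τ₁) * c * τ₁ = t by field_simp]
      rw [hFdef]
      congr 1
      field_simp
    have hzpos : 0 < t / (c * τ₁) := by positivity
    obtain ⟨z0, hz0, hz0eq⟩ := chi0_exists_zero hb0 hb1 hc0 hτ₁0 hzpos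
      (by rw [hchi]; exact hFc.le)
    have := (hcs_char τ₁ hτ₁0 c hc0).mp ⟨z0, hz0, hz0eq⟩
    rw [← hc₁def] at this
    exact absurd hcc₁ (not_lt.mpr this)
  -- claim4 : along τ₁, at the critical speed, chi1 in t-form is nonpositive
  have claim4 : ∀ t > (0:ℝ), b * Real.exp t < 1 →
      t ^ 2 / (c₁ * τ₁) ^ 2 + t / τ₁ - Real.exp t / (1 - b * Real.exp t) ≤ 0 := by
    intro t ht htden
    by_contra hlt
    push_neg at hlt
    set F : ℝ → ℝ := fun c =>
        t ^ 2 / (c * τ₁) ^ 2 + t / τ₁ - Real.exp t / (1 - b * Real.exp t) with hFdef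
    have hFc₁ : 0 < F c₁ := hlt
    have hFcont : ContinuousAt F c₁ := by
      have h1 : ((c₁ * τ₁) ^ 2 : ℝ) ≠ 0 := by positivity
      exact ContinuousAt.sub
        (ContinuousAt.add (ContinuousAt.div continuousAt_const (by fun_prop) h1)
          continuousAt_const) continuousAt_const
    have e1 : ∀ᶠ c in nhds c₁, 0 < F c := hFcont.eventually (eventually_gt_nhds hFc₁)
    have e3 : ∀ᶠ c in nhdsWithin c₁ (Ioi c₁), 0 < F c :=
      e1.filter_mono nhdsWithin_le_nhds
    have e4 : ∀ᶠ c in nhdsWithin c₁ (Ioi c₁), c ∈ Ioi c₁ := eventually_mem_nhdsWithin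
    obtain ⟨c, hFc, hcc₁⟩ := (e3.and e4).exists
    have hc0 : 0 < c := lt_trans hc₁0 hcc₁
    have hcne : c ≠ 0 := ne_of_gt hc0
    have harg : -(-(t / (c * τ₁)) * c * τ₁) = t := by field_simp
    have hchi : chi1 b c τ₁ (-(t / (c * τ₁))) = F c := by
      unfold chi1
      rw [harg, hFdef]
      congr 1
      field_simp
      ring
    have hzneg : -(t / (c * τ₁)) < 0 := by
      have : 0 < t / (c * τ₁) := by positivity
      linarith
    have hden' : b * Real.exp (-(-(t / (c * τ₁)) * c * τ₁)) < 1 := by rw [harg]; exact htden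
    obtain ⟨z0, hz0, hz0eq⟩ := chi1_exists_zero hb0 hb1 hc0 hτ₁0 hzneg hden'
      (by rw [hchi]; exact hFc.le)
    have := (hsh_char τ₁ hτ₁b c hc0).mp ⟨z0, hz0, hz0eq⟩
    rw [← h₁] at this
    exact absurd hcc₁ (not_lt.mpr this)
  -- chi0 zero at (c₂, τ₂)
  obtain ⟨z₂, hz₂pos, hz₂eq⟩ := (hcs_char τ₂ hτ₂0 c₂ hc₂0).mpr le_rfl
  -- chi1 zero at (c₂, τ₂)
  obtain ⟨w₂, hw₂neg, hw₂eq⟩ := (hsh_char τ₂ hτ₂b c₂ hc₂0).mpr (le_of_eq h₂)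
  obtain ⟨hw₂den, hw₂R⟩ := chi1_zero_data hb0 hc₂0 hw₂neg hw₂eq
  -- convert chi0 zero to t-form
  have hseq : z₂ ^ 2 - c₂ * z₂ =
      (z₂ * c₂ * τ₂) ^ 2 / (c₂ * τ₂) ^ 2 - (z₂ * c₂ * τ₂) / τ₂ := by
    field_simp
  have hz₂eq' : (z₂ * c₂ * τ₂) ^ 2 / (c₂ * τ₂) ^ 2 - (z₂ * c₂ * τ₂) / τ₂
      + 1 / (1 - b * Real.exp (-(z₂ * c₂ * τ₂))) = 0 := by
    unfold chi0 at hz₂eq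
    rw [← hseq]
    linarith
  have hs0 : 0 < z₂ * c₂ * τ₂ := by positivity
  have hA := claim2 (z₂ * c₂ * τ₂) hs0
  have hA2 : (z₂ * c₂ * τ₂) ^ 2 / (c₂ * τ₂) ^ 2 - (z₂ * c₂ * τ₂) / τ₂ ≤
      (z₂ * c₂ * τ₂) ^ 2 / (c₁ * τ₁) ^ 2 - (z₂ * c₂ * τ₂) / τ₁ := by linarith
  -- convert chi1 zero to t-form
  have hs'0 : 0 < -(w₂ * c₂ * τ₂) := by
    have h1 : w₂ * c₂ < 0 := mul_neg_of_neg_of_pos hw₂neg hc₂0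
    have h2 : w₂ * c₂ * τ₂ < 0 := mul_neg_of_neg_of_pos h1 hτ₂0
    linarith
  have hw₂den' : b * Real.exp (-(w₂ * c₂ * τ₂)) < 1 := hw₂den
  have hseq' : w₂ ^ 2 - c₂ * w₂ =
      (-(w₂ * c₂ * τ₂)) ^ 2 / (c₂ * τ₂) ^ 2 + (-(w₂ * c₂ * τ₂)) / τ₂ := by
    field_simp
    ring
  have hB := claim4 (-(w₂ * c₂ * τ₂)) hs'0 hw₂den'
  have hB2 : (-(w₂ * c₂ * τ₂)) ^ 2 / (c₁ * τ₁) ^ 2 + (-(w₂ * c₂ * τ₂)) / τ₁ ≤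
      (-(w₂ * c₂ * τ₂)) ^ 2 / (c₂ * τ₂) ^ 2 + (-(w₂ * c₂ * τ₂)) / τ₂ := by
    rw [← hseq', ← hw₂R]
    linarith
  -- final contradiction
  have hδ : 1 / τ₂ < 1 / τ₁ := one_div_lt_one_div_of_lt hτ₁0 h12
  set s := z₂ * c₂ * τ₂ with hsdef
  set s' := -(w₂ * c₂ * τ₂) with hs'def
  have hd1 : 1 / (c₂ * τ₂) ^ 2 < 1 / (c₁ * τ₁) ^ 2 := cross_ineq₁ hs0 hδ hA2
  have hd2 : 1 / (c₁ * τ₁) ^ 2 < 1 / (c₂ * τ₂) ^ 2 := cross_ineq₂ hs'0 hδ hB2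
  linarith

private theorem exist_lemma (b : ℝ) (hb0 : 0 < b) (hb1 : b < 1)
    (τb : ℝ) (hτb : 0 < τb) (cstar csharp : ℝ → ℝ)
    (hcs_cont : ContinuousOn cstar (Set.Ioi 0))
    (hcs_gt2 : ∀ τ > (0 : ℝ), 2 < cstar τ)
    (hcs_char : ∀ τ > (0 : ℝ), ∀ c > (0 : ℝ),
      ((∃ z > (0 : ℝ), chi0 b c τ z = 0) ↔ cstar τ ≤ c))
    (hsh_cont : ContinuousOn csharp (Set.Ioi τb))
    (hsh_char : ∀ τ > τb, ∀ c > (0 : ℝ),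
      ((∃ z < (0 : ℝ), chi1 b c τ z = 0) ↔ c ≤ csharp τ))
    (hsmall : ∀ τ : ℝ, 0 < τ → τ ≤ τb → ∀ c > (0 : ℝ), ∃ z < (0 : ℝ), chi1 b c τ z = 0) :
    ∃ τ₀ : ℝ, τb < τ₀ ∧ cstar τ₀ = csharp τ₀ := by
  have h1b : 0 < 1 - b := by linarith
  obtain ⟨C, hCdef⟩ : ∃ x : ℝ, x = 2 / (1 - b) := ⟨_, rfl⟩
  have hC0 : 0 < C := by rw [hCdef]; positivity
  have hC2 : (0:ℝ) < C + 2 := by linarith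
  have hC1 : (0:ℝ) < C + 1 := by linarith
  ---- near τb, csharp is bigger than C + 1
  obtain ⟨w, hwneg, hweq⟩ := hsmall τb hτb le_rfl (C + 2) hC2
  obtain ⟨hwden, hwR⟩ := chi1_zero_data hb0 hC2 hwneg hweq
  obtain ⟨s, hsdef⟩ : ∃ x : ℝ, x = -(w * (C + 2) * τb) := ⟨_, rfl⟩
  rw [show -(w * (C + 2) * τb) = s from hsdef.symm] at hwden hwR
  have hs0 : 0 < s := by
    have h1 : w * (C + 2) < 0 := mul_neg_of_neg_of_pos hwneg hC2
    have h2 : w * (C + 2) * τb < 0 := mul_neg_of_neg_of_pos h1 hτb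
    rw [hsdef]; linarith
  have hwseq : w ^ 2 - (C + 2) * w = s ^ 2 / ((C + 2) * τb) ^ 2 + s / τb := by
    rw [hsdef]
    have hne : (C + 2) * τb ≠ 0 := by positivity
    field_simp
    ring
  obtain ⟨G, hGdef⟩ : ∃ g : ℝ → ℝ, g = fun τ =>
      s ^ 2 / ((C + 1) * τ) ^ 2 + s / τ - Real.exp s / (1 - b * Real.exp s) := ⟨_, rfl⟩
  have hGval : ∀ τ : ℝ, G τ =
      s ^ 2 / ((C + 1) * τ) ^ 2 + s / τ - Real.exp s / (1 - b * Real.exp s) := by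
    intro τ; rw [hGdef]
  have hGτb : 0 < G τb := by
    have hlt : s ^ 2 / ((C + 2) * τb) ^ 2 < s ^ 2 / ((C + 1) * τb) ^ 2 := by
      apply div_lt_div_of_pos_left (by positivity) (by positivity)
      have h2 : (C + 1) * τb < (C + 2) * τb :=
        mul_lt_mul_of_pos_right (by linarith) hτb
      exact pow_lt_pow_left₀ h2 (by positivity) two_ne_zero
    rw [hGval τb, hwR, hwseq]
    linarith
  have hGcont : ContinuousAt G τb := by
    have h1 : (((C + 1) * τb) ^ 2 : ℝ) ≠ 0 := by positivity
    rw [hGdef]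
    exact ContinuousAt.sub
      (ContinuousAt.add (ContinuousAt.div continuousAt_const (by fun_prop) h1)
        (ContinuousAt.div continuousAt_const (by fun_prop) (ne_of_gt hτb)))
      continuousAt_const
  have e1 : ∀ᶠ τ in nhdsWithin τb (Ioi τb), 0 < G τ :=
    (hGcont.eventually (eventually_gt_nhds hGτb)).filter_mono nhdsWithin_le_nhds
  have e2 : ∀ᶠ τ in nhdsWithin τb (Ioi τb), τ ∈ Ioi τb := eventually_mem_nhdsWithin
  obtain ⟨τlo, hGτlo, hτlo⟩ := (e1.and e2).exists
  have hτlo' : τb < τlo := hτlo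
  have hτlo0 : 0 < τlo := lt_trans hτb hτlo'
  -- chi1 at (C+1, τlo) has a negative zero
  have harg : -(-(s / ((C + 1) * τlo)) * (C + 1) * τlo) = s := by field_simp
  have hchi : chi1 b (C + 1) τlo (-(s / ((C + 1) * τlo))) = G τlo := by
    unfold chi1
    rw [harg, hGval τlo]
    congr 1
    field_simp
    ring
  have hzneg : -(s / ((C + 1) * τlo)) < 0 := by
    have : 0 < s / ((C + 1) * τlo) := by positivity
    linarith
  have hden' : b * Real.exp (-(-(s / ((C + 1) * τlo)) * (C + 1) * τlo)) < 1 := by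
    rw [harg]; exact hwden
  obtain ⟨z1, hz1, hz1eq⟩ := chi1_exists_zero hb0 hb1 hC1 hτlo0 hzneg hden'
    (by rw [hchi]; exact hGτlo.le)
  have hshlo : C + 1 ≤ csharp τlo := (hsh_char τlo hτlo' (C + 1) hC1).mp ⟨z1, hz1, hz1eq⟩
  -- cstar τlo ≤ C
  have hcslo : cstar τlo ≤ C := by
    have hx : (0:ℝ) ≤ C / 2 * C * τlo := by positivity
    have hE1 : Real.exp (-(C / 2 * C * τlo)) ≤ 1 := Real.exp_le_one_iff.mpr (by linarith)
    have hden := den0_pos hb0 hb1 hx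
    have hge : 1 - b ≤ 1 - b * Real.exp (-(C / 2 * C * τlo)) := by
      have := mul_le_mul_of_nonneg_left hE1 hb0.le
      linarith
    have h1 : 1 / (1 - b * Real.exp (-(C / 2 * C * τlo))) ≤ 1 / (1 - b) :=
      one_div_le_one_div_of_le h1b hge
    have hgeone : 1 ≤ 1 / (1 - b) := by rw [le_div_iff₀ h1b]; linarith
    have hC4 : (C / 2) ^ 2 - C * (C / 2) = -((1 / (1 - b)) ^ 2) := by
      rw [hCdef]; field_simp; ring
    have hle : chi0 b C τlo (C / 2) ≤ 0 := by
      unfold chi0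
      rw [hC4]
      have hpos : (0:ℝ) ≤ 1 / (1 - b) := by positivity
      have e2 : (1 / (1 - b)) ^ 2 = (1 / (1 - b)) * (1 / (1 - b)) := pow_two _
      have e3 := mul_le_mul_of_nonneg_left hgeone hpos
      linarith
    obtain ⟨z0, hz0, hz0eq⟩ := chi0_exists_zero hb0 hb1 hC0 hτlo0 (by positivity) hle
    exact (hcs_char τlo hτlo0 C hC0).mp ⟨z0, hz0, hz0eq⟩
  ---- for large τ, csharp < 2 < cstar
  obtain ⟨L, hLdef⟩ : ∃ x : ℝ, x = -Real.log b := ⟨_, rfl⟩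
  have hL0 : 0 < L := by rw [hLdef]; linarith [Real.log_neg hb0 hb1]
  obtain ⟨τhi, hτhidef⟩ : ∃ x : ℝ, x = max (τlo + 1) (L ^ 2 / 4 + L + 1) := ⟨_, rfl⟩
  have hτhilo : τlo < τhi := by
    rw [hτhidef]; exact lt_of_lt_of_le (by linarith) (le_max_left _ _)
  have hτhib : τb < τhi := lt_trans hτlo' hτhilo
  have hτhi0 : 0 < τhi := lt_trans hτb hτhib
  have hτhi1 : 1 ≤ τhi := by
    have : τlo + 1 ≤ τhi := by rw [hτhidef]; exact le_max_left _ _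
    linarith
  have hτhiL : L ^ 2 / 4 + L < τhi := by
    rw [hτhidef]; exact lt_of_lt_of_le (by linarith) (le_max_right _ _)
  have hnozero : ¬ ∃ z < (0:ℝ), chi1 b 2 τhi z = 0 := by
    rintro ⟨z, hz, hzeq⟩
    obtain ⟨hd, hR⟩ := chi1_zero_data hb0 two_pos hz hzeq
    obtain ⟨u, hudef⟩ : ∃ x : ℝ, x = -(z * 2 * τhi) := ⟨_, rfl⟩
    rw [show -(z * 2 * τhi) = u from hudef.symm] at hd hR
    have hu0 : 0 < u := by
      have h1 : z * 2 < 0 := by linarith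
      have h2 : z * 2 * τhi < 0 := mul_neg_of_neg_of_pos h1 hτhi0
      rw [hudef]; linarith
    have huL : u < L := by
      have h2 : Real.exp u < 1 / b := by
        rw [lt_div_iff₀ hb0]; linarith
      have h3 : u < Real.log (1 / b) := by
        have := Real.log_lt_log (Real.exp_pos u) h2
        rwa [Real.log_exp] at this
      rw [hLdef]
      rwa [one_div, Real.log_inv] at h3
    have hexp1 : 1 < Real.exp u := Real.one_lt_exp_iff.mpr hu0
    have hdenpos : 0 < 1 - b * Real.exp u := by linarith
    have hRlb : 1 / (1 - b) ≤ Real.exp u / (1 - b * Real.exp u) := by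
      apply div_le_div₀ (Real.exp_pos u).le hexp1.le hdenpos
      have := mul_le_mul_of_nonneg_left hexp1.le hb0.le
      linarith
    have hone : 1 < 1 / (1 - b) := by
      rw [lt_div_iff₀ h1b]; linarith
    have hgt1 : 1 < z ^ 2 - 2 * z := by rw [← hR]; linarith
    have hzu : z ^ 2 - 2 * z = u ^ 2 / (2 * τhi) ^ 2 + u / τhi := by
      rw [hudef]
      field_simp
      ring
    have hu2 : u ^ 2 ≤ L ^ 2 := pow_le_pow_left₀ hu0.le huL.le 2
    have hden2 : 4 * τhi ≤ (2 * τhi) ^ 2 := by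
      have := mul_le_mul_of_nonneg_left hτhi1 hτhi0.le
      linarith [this]
    have b1 : u ^ 2 / (2 * τhi) ^ 2 ≤ L ^ 2 / (4 * τhi) :=
      div_le_div₀ (sq_nonneg L) hu2 (by positivity) hden2
    have b2 : u / τhi ≤ L / τhi := (div_le_div_iff_of_pos_right hτhi0).mpr huL.le
    have b3 : (L ^ 2 / 4 + L) / τhi < 1 := (div_lt_one hτhi0).mpr (by linarith)
    have b4 : (L ^ 2 / 4 + L) / τhi = L ^ 2 / (4 * τhi) + L / τhi := by ring
    linarith
  have hshhi : csharp τhi < 2 := by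
    by_contra hy
    push_neg at hy
    exact hnozero ((hsh_char τhi hτhib 2 two_pos).mpr hy)
  have hcshi : 2 < cstar τhi := hcs_gt2 τhi hτhi0
  ---- intermediate value theorem
  have hsub1 : Icc τlo τhi ⊆ Ioi (0:ℝ) := fun x hx => lt_of_lt_of_le hτlo0 hx.1
  have hsub2 : Icc τlo τhi ⊆ Ioi τb := fun x hx => lt_of_lt_of_le hτlo' hx.1
  have hfc : ContinuousOn (fun τ => cstar τ - csharp τ) (Icc τlo τhi) :=
    (hcs_cont.mono hsub1).sub (hsh_cont.mono hsub2)
  have hmem : (0:ℝ) ∈ Icc (cstar τlo - csharp τlo) (cstar τhi - csharp τhi) :=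
    ⟨by linarith, by linarith⟩
  obtain ⟨τ₀, hτ₀mem, hτ₀eq⟩ := intermediate_value_Icc hτhilo.le hfc hmem
  exact ⟨τ₀, lt_of_lt_of_le hτlo' hτ₀mem.1, sub_eq_zero.mp hτ₀eq⟩

/-- The critical-speed curves `c = c_*(τ)` (τ > 0) and `c = c_#(τ)`
(τ > τ(b)) intersect at exactly one point. -/
theorem curves_intersect_once (b : ℝ) (hb : b ∈ Set.Ioo (0 : ℝ) 1)
    (τb : ℝ) (hτb : 0 < τb) (cstar csharp : ℝ → ℝ)
    (hcs_cont : ContinuousOn cstar (Set.Ioi 0))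
    (hcs_anti : StrictAntiOn cstar (Set.Ioi 0))
    (hcs_gt2 : ∀ τ > (0 : ℝ), 2 < cstar τ)
    (hcs_char : ∀ τ > (0 : ℝ), ∀ c > (0 : ℝ),
      ((∃ z > (0 : ℝ), chi0 b c τ z = 0) ↔ cstar τ ≤ c))
    (hsh_cont : ContinuousOn csharp (Set.Ioi τb))
    (hsh_anti : StrictAntiOn csharp (Set.Ioi τb))
    (hsh_pos : ∀ τ > τb, 0 < csharp τ)
    (hsh_char : ∀ τ > τb, ∀ c > (0 : ℝ),
      ((∃ z < (0 : ℝ), chi1 b c τ z = 0) ↔ c ≤ csharp τ))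
    (hsmall : ∀ τ : ℝ, 0 < τ → τ ≤ τb → ∀ c > (0 : ℝ), ∃ z < (0 : ℝ), chi1 b c τ z = 0) :
    ∃! τ₀ : ℝ, τb < τ₀ ∧ cstar τ₀ = csharp τ₀ := by
  obtain ⟨hb0, hb1⟩ := hb
  obtain ⟨τ₀, hτ₀b, hτ₀eq⟩ := exist_lemma b hb0 hb1 τb hτb cstar csharp hcs_cont
    hcs_gt2 hcs_char hsh_cont hsh_char hsmall
  refine ⟨τ₀, ⟨hτ₀b, hτ₀eq⟩, ?_⟩
  rintro y ⟨hyb, hyeq⟩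
  by_contra hne
  rcases lt_or_gt_of_ne hne with h | h
  · exact key_lemma b hb0 hb1 τb hτb cstar csharp hcs_anti hcs_gt2 hcs_char hsh_char
      y τ₀ hyb h hyeq hτ₀eq
  · exact key_lemma b hb0 hb1 τb hτb cstar csharp hcs_anti hcs_gt2 hcs_char hsh_char
      τ₀ y hτ₀b h hτ₀eq hyeq
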